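/- Let A be a finite-rank unital ring that is free as a ℤ-module with basis (b_i) such that all structure constants N_{ij}^k (defined by b_i b_j = Σ_k N_{ij}^k b_k) are nonnegative. If φ, ψ : A → ℝ are ring homomorphisms with φ(b_i) > 0 and ψ(b_i) > 0 for all i, then φ = ψ. -/

import Mathlib

private lemma expand_char {A : Type*} [Ring A] {ι : Type*} [Fintype ι]
    (b : Module.Basis ι ℤ A) (φ : A →+* ℝ) (a : A) :
    φ a = ∑ k, (b.repr a k : ℝ) * φ (b k) := by
  conv_lhs => rw [← b.sum_repr a]
  rw [map_sum]
  refine Finset.sum_congr rfl fun k _ => ?_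
  rw [map_zsmul, zsmul_eq_mul]

private lemma char_le {A : Type*} [Ring A] {ι : Type*} [Fintype ι] [Nonempty ι]
    (b : Module.Basis ι ℤ A)
    (hstruct : ∀ i j k, 0 ≤ b.repr (b i * b j) k)
    (φ ψ : A →+* ℝ)
    (hφ : ∀ i, 0 < φ (b i)) (hψ : ∀ i, 0 < ψ (b i)) (j : ι) :
    φ (b j) ≤ ψ (b j) := by
  obtain ⟨i, hi⟩ := Finite.exists_max (fun i => φ (b i) / ψ (b i))
  set M := φ (b i) / ψ (b i) with hM
  have hbound : ∀ k, φ (b k) ≤ M * ψ (b k) := fun k => by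
    have := hi k
    rw [div_le_iff₀ (hψ k)] at this
    linarith [this]
  have key : φ (b i) * φ (b j) ≤ M * (ψ (b i) * ψ (b j)) := by
    rw [← φ.map_mul, ← ψ.map_mul, expand_char b φ, expand_char b ψ, Finset.mul_sum]
    refine Finset.sum_le_sum fun k _ => ?_
    have hc : (0:ℝ) ≤ (b.repr (b i * b j) k : ℝ) := by exact_mod_cast hstruct i j k
    calc (b.repr (b i * b j) k : ℝ) * φ (b k)
        ≤ (b.repr (b i * b j) k : ℝ) * (M * ψ (b k)) :=
          mul_le_mul_of_nonneg_left (hbound k) hc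
      _ = M * ((b.repr (b i * b j) k : ℝ) * ψ (b k)) := by ring
  have hMψ : M * ψ (b i) = φ (b i) := div_mul_cancel₀ _ (ne_of_gt (hψ i))
  have : φ (b i) * φ (b j) ≤ φ (b i) * ψ (b j) := by
    calc φ (b i) * φ (b j) ≤ M * (ψ (b i) * ψ (b j)) := key
      _ = (M * ψ (b i)) * ψ (b j) := by ring
      _ = φ (b i) * ψ (b j) := by rw [hMψ]
  exact le_of_mul_le_mul_left this (hφ i)

/-- Uniqueness of the positive character of a ℤ₊-ring: if `A` is a unital ring, free of
finite rank over ℤ with basis `b` containing `1` and nonnegative structure constants, and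
`φ, ψ : A → ℝ` are ring homomorphisms positive on every basis element, then `φ = ψ`. -/
theorem stmt1 (A : Type*) [Ring A] (ι : Type*) [Fintype ι]
    (b : Module.Basis ι ℤ A) (i0 : ι) (hone : b i0 = 1)
    (hstruct : ∀ i j k, 0 ≤ b.repr (b i * b j) k)
    (φ ψ : A →+* ℝ)
    (hφ : ∀ i, 0 < φ (b i)) (hψ : ∀ i, 0 < ψ (b i)) :
    φ = ψ := by
  have : Nonempty ι := ⟨i0⟩
  have heq : ∀ j, φ (b j) = ψ (b j) := fun j =>
    le_antisymm (char_le b hstruct φ ψ hφ hψ j) (char_le b hstruct ψ φ hψ hφ j)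
  ext a
  rw [expand_char b φ, expand_char b ψ]
  exact Finset.sum_congr rfl fun k _ => by rw [heq k]
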